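/- Every φ ∈ Ξ'_ι[λ] has nonnegative constant term: φ(0) ≥ 0. (Equivalently, the zero vector lies in Σ'_ι[λ] = { x : φ(x) ≥ 0 for all φ ∈ Ξ'_ι[λ] }; this is the key step showing that the connected component B_0(λ) is contained in Σ_ι[λ] ∩ Σ'_ι[λ] in Theorem 6.1.) -/

import Mathlib

noncomputable section

/-- An affine function `φ(x) = c + Σ_k φ_k x_k` on `ℤ^∞[λ]`: a constant term
together with a finitely supported family of coefficients indexed by the
nonzero integers (the coefficient at index `0` is always `0` below). -/
abbrev Aff : Type := ℚ × (ℤ →₀ ℚ)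

/-- Evaluation of an affine function at a rational point. -/
def evalF (φ : Aff) (x : ℤ → ℚ) : ℚ := φ.1 + ∑ t ∈ φ.2.support, φ.2 t * x t

/-- Evaluation of an affine function at an integer point. -/
def evalZ (φ : Aff) (x : ℤ →₀ ℤ) : ℚ := φ.1 + ∑ t ∈ φ.2.support, φ.2 t * (x t : ℚ)

variable {I : Type*}

/-- `σ_k(x) = x_k + Σ_{j>k, j≠0} a_{i_k i_j} x_j` for `k ≥ 1`, with the extra
constant `-ℓ_{i_k}` when `k ≤ -1`. -/
def sigmaG (a : I → I → ℤ) (ℓ : I → ℤ) (ι : ℤ → I) (k : ℤ) (x : ℤ →₀ ℤ) : ℤ :=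
  (if k ≤ -1 then -ℓ (ι k) else 0) + x k +
    ∑ j ∈ x.support.filter (fun j => k < j ∧ j ≠ 0), a (ι k) (ι j) * x j

/-- The affine function `β̄_k = σ_k − σ_{k^{(+)}}`, given explicitly:
`β̄_k(x) = x_k + Σ_{k<j<k^{(+)}, j≠0} a_{i_k i_j} x_j + x_{k^{(+)}}`, plus the
constant `-ℓ_{i_k}` exactly when `k ≤ -1 < 1 ≤ k^{(+)}`. -/
def betaBarG (a : I → I → ℤ) (ℓ : I → ℤ) (ι : ℤ → I) (kp : ℤ → ℤ) (k : ℤ) : Aff :=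
  ⟨if k ≤ -1 ∧ 1 ≤ kp k then -(ℓ (ι k) : ℚ) else 0,
   Finsupp.onFinset (insert k (insert (kp k) (Finset.Ioo k (kp k))))
     (fun j => (if j = k then 1 else 0) + (if j = kp k then 1 else 0)
       + (if k < j ∧ j < kp k ∧ j ≠ 0 then (a (ι k) (ι j) : ℚ) else 0))
     (by
       intro j hj
       simp only [Finset.mem_insert, Finset.mem_Ioo]
       by_contra hc
       push_neg at hc
       obtain ⟨h1, h2, h3⟩ := hc
       apply hj
       simp only [if_neg h1, if_neg h2,
         if_neg (show ¬(k < j ∧ j < kp k ∧ j ≠ 0) by omega)]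
       ring)⟩

/-- The operator `S̄_k` on affine functions: `S̄_k φ = φ − φ_k β̄_k` if `φ_k > 0`
and `S̄_k φ = φ − φ_k β̄_{k^{(−)}}` if `φ_k ≤ 0`. -/
def SbarG (a : I → I → ℤ) (ℓ : I → ℤ) (ι : ℤ → I) (kp km : ℤ → ℤ) (k : ℤ) (φ : Aff) :
    Aff :=
  if 0 < φ.2 k then
    ⟨φ.1 - φ.2 k * (betaBarG a ℓ ι kp k).1, φ.2 - φ.2 k • (betaBarG a ℓ ι kp k).2⟩
  else
    ⟨φ.1 - φ.2 k * (betaBarG a ℓ ι kp (km k)).1,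
     φ.2 - φ.2 k • (betaBarG a ℓ ι kp (km k)).2⟩

end

noncomputable section

/-- The sequence `ι = (…,2,1,2,1,t_λ,2,1,2,1,…)` of type `A_1^{(1)}`:
`i_k = 1` for `k ≥ 1` odd, `i_k = 2` for `k ≥ 1` even, `i_{−m} = 2` for
`m ≥ 1` odd, `i_{−m} = 1` for `m ≥ 1` even. -/
def iseqB (k : ℤ) : ℤ :=
  if 0 < k then (if k % 2 = 1 then 1 else 2) else (if k % 2 = 1 then 2 else 1)

/-- The Cartan matrix of type `A_1^{(1)}`: `a_{11} = a_{22} = 2`,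
`a_{12} = a_{21} = −2`. -/
def aB (p q : ℤ) : ℤ := if p = q then 2 else -2

/-- The weight coefficients: `ℓ 1 = λ_1`, `ℓ 2 = λ_2`. -/
def lamB (lam1 lam2 : ℤ) (p : ℤ) : ℤ := if p = 1 then lam1 else lam2

/-- `k^{(+)}` for the type `A_1^{(1)}` sequence. -/
def kpB (k : ℤ) : ℤ := if -2 ≤ k ∧ k ≤ -1 then k + 3 else k + 2

/-- `k^{(−)}` for the type `A_1^{(1)}` sequence. -/
def kmB (k : ℤ) : ℤ := if 1 ≤ k ∧ k ≤ 2 then k - 3 else k - 2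

/-- The operator `S̄` at position `k` for the type `A_1^{(1)}` sequence. -/
def SbarB (lam1 lam2 : ℤ) (k : ℤ) (φ : Aff) : Aff :=
  SbarG aB (lamB lam1 lam2) iseqB kpB kmB k φ

/-- `C_{−k} = max(0, −(k−1)λ_1 − kλ_2)`, type `A_1^{(1)}`. -/
def CB (lam1 lam2 k : ℤ) : ℤ := max 0 (-(k - 1) * lam1 - k * lam2)

/-- The generator `x_{−k} + C_{−k}` of `Ξ'_ι[λ]`, as an affine function. -/
def genB (lam1 lam2 : ℤ) (k : ℤ) : Aff :=
  ⟨(CB lam1 lam2 k : ℚ), Finsupp.single (-k) 1⟩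

/-- `Ξ'_ι[λ] = { S̄_{−j_l} ⋯ S̄_{−j_1}(x_{−k} + C_{−k}) :
l ≥ 0, k ≥ 1, j_1,…,j_l ≥ 1 }` for type `A_1^{(1)}`. -/
def XiPrimeB (lam1 lam2 : ℤ) : Set Aff :=
  { φ | ∃ js : List ℤ, (∀ m ∈ js, 1 ≤ m) ∧ ∃ k : ℤ, 1 ≤ k ∧
      φ = js.foldl (fun ψ m => SbarB lam1 lam2 (-m) ψ) (genB lam1 lam2 k) }

/-- `φ^{(l)}_{−k}`: `S̄` applied to `x_{−k}` at the `l` consecutive nonzero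
positions `−k, −k+1, …` (skipping `0`). -/
def phiLB (lam1 lam2 k : ℤ) : ℕ → Aff
  | 0 => ⟨0, Finsupp.single (-k) 1⟩
  | l + 1 =>
      SbarB lam1 lam2 (if (-k + (l : ℤ)) < 0 then -k + (l : ℤ) else -k + (l : ℤ) + 1)
        (phiLB lam1 lam2 k l)

/-- `θ(t) = 1` for `t ≥ 0` and `θ(t) = 0` for `t < 0`. -/
def theta (t : ℤ) : ℤ := if 0 ≤ t then 1 else 0

/-- The coordinate `x_t`, with the convention that the coordinate indexed by
`0` is `0`. -/
def Xc0 (x : ℤ → ℚ) (t : ℤ) : ℚ := if t = 0 then 0 else x t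

end

noncomputable section

namespace XiAux

/-- `n(s)`: the `s`-th nonzero integer starting from `-k` (skipping `0`). -/
def nnI (k s : ℤ) : ℤ := if s < k then s - k else s - k + 1

/-- Constant term of `φ^{(s)}`. -/
def phiC (lam1 lam2 k s : ℤ) : ℤ :=
  CB lam1 lam2 k + (if k - 1 ≤ s then (k - 1) * lam1 else 0) +
    (if k ≤ s then k * lam2 else 0)

/-- `φ^{(s)} = c_s + (s+1) x_{n(s)} - s x_{n(s+1)}`. -/
def phiK (lam1 lam2 k s : ℤ) : Aff :=
  ⟨(phiC lam1 lam2 k s : ℚ),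
   Finsupp.single (nnI k s) ((s : ℚ) + 1) - Finsupp.single (nnI k (s + 1)) (s : ℚ)⟩

lemma nnI_lt (k s : ℤ) : nnI k s < nnI k (s + 1) := by
  unfold nnI; split_ifs <;> omega

lemma nnI_ne (k s : ℤ) : nnI k s ≠ nnI k (s + 1) := (nnI_lt k s).ne

lemma phiK_apply (lam1 lam2 k s t : ℤ) :
    (phiK lam1 lam2 k s).2 t =
      (if t = nnI k s then (s : ℚ) + 1 else 0) -
        (if t = nnI k (s + 1) then (s : ℚ) else 0) := by
  rw [phiK]
  rw [Finsupp.sub_apply, Finsupp.single_apply, Finsupp.single_apply]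
  simp only [eq_comm]

end XiAux

end
noncomputable section
namespace XiAux

lemma aB_adj (A : ℤ) (hA : A + 1 ≤ -1) : aB (iseqB A) (iseqB (A + 1)) = -2 := by
  have h1 : ¬ 0 < A := by omega
  have h2 : ¬ 0 < A + 1 := by omega
  rcases Int.emod_two_eq A with h | h
  · have h3 : (A + 1) % 2 = 1 := by omega
    have h4 : ¬ A % 2 = 1 := by omega
    simp [iseqB, aB, h1, h2, h3, h4]
  · have h3 : ¬ (A + 1) % 2 = 1 := by omega
    simp [iseqB, aB, h1, h2, h3, h]

lemma beta_eq (lam1 lam2 k s : ℤ) (h0 : 0 ≤ s) (hs : s < k) :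
    betaBarG aB (lamB lam1 lam2) iseqB kpB (nnI k s) =
      ⟨(if s = k - 2 then (-lam1 : ℚ) else if s = k - 1 then (-lam2 : ℚ) else 0),
       Finsupp.single (nnI k s) 1 - (2 : ℚ) • Finsupp.single (nnI k (s + 1)) 1
         + Finsupp.single (nnI k (s + 2)) 1⟩ := by
  have hA : nnI k s = s - k := if_pos hs
  rcases (show s ≤ k - 3 ∨ s = k - 2 ∨ s = k - 1 by omega) with hc | hc | hc
  · -- generic case: indices all negative
    have hB : nnI k (s + 1) = s - k + 1 := by unfold nnI; rw [if_pos (by omega)]; ring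
    have hC : nnI k (s + 2) = s - k + 2 := by unfold nnI; rw [if_pos (by omega)]; ring
    have hkp : kpB (s - k) = s - k + 2 := by unfold kpB; rw [if_neg (by omega)]
    rw [hA, hB, hC]
    unfold betaBarG
    refine Prod.ext ?_ ?_ <;> dsimp only
    · rw [hkp, if_neg (by omega), if_neg (by omega), if_neg (by omega)]
    · ext j
      rw [Finsupp.onFinset_apply, hkp]
      rw [Finsupp.add_apply, Finsupp.sub_apply, Finsupp.smul_apply,
        Finsupp.single_apply, Finsupp.single_apply, Finsupp.single_apply]
      by_cases h1 : j = s - k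
      · rw [if_pos h1, if_neg (by omega), if_neg (by omega), if_pos h1.symm,
          if_neg (by omega), if_neg (by omega)]
        norm_num
      by_cases h2 : j = s - k + 2
      · rw [if_neg h1, if_pos h2, if_neg (by omega), if_neg (by omega),
          if_neg (by omega), if_pos h2.symm]
        norm_num
      by_cases h3 : j = s - k + 1
      · rw [if_neg h1, if_neg h2, if_pos (by omega), if_neg (by omega),
          if_pos h3.symm, if_neg (by omega)]
        subst h3
        rw [aB_adj (s - k) (by omega)]
        norm_num
      · rw [if_neg h1, if_neg h2, if_neg (by omega), if_neg (by omega),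
          if_neg (by omega), if_neg (by omega)]
        norm_num
  · -- s = k - 2 : indices -2, -1, 1
    have hA' : nnI k s = -2 := by omega
    have hB : nnI k (s + 1) = -1 := by unfold nnI; rw [if_pos (by omega)]; omega
    have hC : nnI k (s + 2) = 1 := by unfold nnI; rw [if_neg (by omega)]; omega
    have hkp : kpB (-2) = 1 := by unfold kpB; rw [if_pos (by omega)]; norm_num
    rw [hA', hB, hC]
    unfold betaBarG
    refine Prod.ext ?_ ?_ <;> dsimp only
    · rw [hkp, if_pos (by omega), if_pos hc, show iseqB (-2) = 1 by decide]
      simp [lamB]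
    · ext j
      rw [Finsupp.onFinset_apply, hkp]
      rw [Finsupp.add_apply, Finsupp.sub_apply, Finsupp.smul_apply,
        Finsupp.single_apply, Finsupp.single_apply, Finsupp.single_apply]
      by_cases h1 : j = -2
      · rw [if_pos h1, if_neg (by omega), if_neg (by omega), if_pos h1.symm,
          if_neg (by omega), if_neg (by omega)]
        norm_num
      by_cases h2 : j = 1
      · rw [if_neg h1, if_pos h2, if_neg (by omega), if_neg (by omega),
          if_neg (by omega), if_pos h2.symm]
        norm_num
      by_cases h3 : j = -1
      · rw [if_neg h1, if_neg h2, if_pos (by omega), if_neg (by omega),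
          if_pos h3.symm, if_neg (by omega)]
        subst h3
        rw [show aB (iseqB (-2)) (iseqB (-1)) = -2 by decide]
        norm_num
      · rw [if_neg h1, if_neg h2, if_neg (by omega), if_neg (by omega),
          if_neg (by omega), if_neg (by omega)]
        norm_num
  · -- s = k - 1 : indices -1, 1, 2
    have hA' : nnI k s = -1 := by omega
    have hB : nnI k (s + 1) = 1 := by unfold nnI; rw [if_neg (by omega)]; omega
    have hC : nnI k (s + 2) = 2 := by unfold nnI; rw [if_neg (by omega)]; omega
    have hkp : kpB (-1) = 2 := by unfold kpB; rw [if_pos (by omega)]; norm_num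
    rw [hA', hB, hC]
    unfold betaBarG
    refine Prod.ext ?_ ?_ <;> dsimp only
    · rw [hkp, if_pos (by omega), if_neg (by omega), if_pos hc,
        show iseqB (-1) = 2 by decide]
      simp [lamB]
    · ext j
      rw [Finsupp.onFinset_apply, hkp]
      rw [Finsupp.add_apply, Finsupp.sub_apply, Finsupp.smul_apply,
        Finsupp.single_apply, Finsupp.single_apply, Finsupp.single_apply]
      by_cases h1 : j = -1
      · rw [if_pos h1, if_neg (by omega), if_neg (by omega), if_pos h1.symm,
          if_neg (by omega), if_neg (by omega)]
        norm_num
      by_cases h2 : j = 2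
      · rw [if_neg h1, if_pos h2, if_neg (by omega), if_neg (by omega),
          if_neg (by omega), if_pos h2.symm]
        norm_num
      by_cases h3 : j = 1
      · rw [if_neg h1, if_neg h2, if_pos (by omega), if_neg (by omega),
          if_pos h3.symm, if_neg (by omega)]
        subst h3
        rw [show aB (iseqB (-1)) (iseqB 1) = -2 by decide]
        norm_num
      · rw [if_neg h1, if_neg h2, if_neg (by omega), if_neg (by omega),
          if_neg (by omega), if_neg (by omega)]
        norm_num

end XiAux
end
noncomputable section
namespace XiAux

lemma nnI_big (k s : ℤ) (h : k ≤ s) : nnI k s = s - k + 1 := if_neg (by omega)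

lemma step (lam1 lam2 k m s : ℤ) (hk : 1 ≤ k) (hm : 1 ≤ m) (h0 : 0 ≤ s)
    (hsk : s ≤ k) :
    ∃ s', 0 ≤ s' ∧ s' ≤ k ∧
      SbarB lam1 lam2 (-m) (phiK lam1 lam2 k s) = phiK lam1 lam2 k s' := by
  by_cases hA : -m = nnI k s ∧ s < k
  · -- forward step
    obtain ⟨hm1, hsl⟩ := hA
    refine ⟨s + 1, by omega, by omega, ?_⟩
    have hpk : (phiK lam1 lam2 k s).2 (-m) = (s : ℚ) + 1 := by
      rw [phiK_apply, if_pos hm1, if_neg (by rw [hm1]; exact nnI_ne k s), sub_zero]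
    unfold SbarB SbarG
    rw [hpk, if_pos (by
      have : (0 : ℚ) ≤ (s : ℚ) := by exact_mod_cast h0
      linarith)]
    rw [hm1, beta_eq lam1 lam2 k s h0 hsl]
    unfold phiK
    refine Prod.ext ?_ ?_ <;> dsimp only
    · rcases (show s = k - 2 ∨ s = k - 1 ∨ (s ≠ k - 2 ∧ s ≠ k - 1) by omega)
        with hc | hc | ⟨hc1, hc2⟩
      · rw [if_pos hc]
        unfold phiC
        rw [if_neg (by omega), if_neg (by omega), if_pos (by omega),
          if_neg (by omega)]
        rw [hc]
        push_cast
        ring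
      · rw [if_neg (by omega), if_pos hc]
        unfold phiC
        rw [if_pos (by omega), if_neg (by omega), if_pos (by omega),
          if_pos (by omega)]
        rw [hc]
        push_cast
        ring
      · rw [if_neg hc1, if_neg hc2]
        unfold phiC
        rw [if_neg (by omega), if_neg (by omega), if_neg (by omega),
          if_neg (by omega)]
        push_cast
        ring
    · have he2 : nnI k (s + 1 + 1) = nnI k (s + 2) := congrArg (nnI k) (by ring)
      rw [he2]
      ext t
      simp only [Finsupp.sub_apply, Finsupp.add_apply, Finsupp.smul_apply,
        smul_eq_mul, Finsupp.single_apply]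
      split_ifs <;> push_cast <;> ring
  by_cases hB : -m = nnI k (s + 1) ∧ 1 ≤ s ∧ s + 1 < k
  · -- backward step
    obtain ⟨hm1, hs1, hs2⟩ := hB
    refine ⟨s - 1, by omega, by omega, ?_⟩
    have hpk : (phiK lam1 lam2 k s).2 (-m) = -(s : ℚ) := by
      rw [phiK_apply, if_neg (by rw [hm1]; exact (nnI_ne k s).symm), if_pos hm1,
        zero_sub]
    unfold SbarB SbarG
    rw [hpk, if_neg (by
      have : (1 : ℚ) ≤ (s : ℚ) := by exact_mod_cast hs1
      push_neg
      linarith)]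
    have hkm : kmB (-m) = nnI k (s - 1) := by
      rw [hm1, show nnI k (s + 1) = s + 1 - k from if_pos (by omega)]
      unfold kmB
      rw [if_neg (by omega), show nnI k (s - 1) = s - 1 - k from if_pos (by omega)]
      ring
    rw [hkm, beta_eq lam1 lam2 k (s - 1) (by omega) (by omega),
      show s - 1 + 1 = s from by ring, show s - 1 + 2 = s + 1 from by ring]
    unfold phiK
    refine Prod.ext ?_ ?_ <;> dsimp only
    · rw [if_neg (by omega), if_neg (by omega), mul_zero, sub_zero]
      unfold phiC
      rw [if_neg (by omega), if_neg (by omega), if_neg (by omega),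
        if_neg (by omega)]
    · have he2 : nnI k (s - 1 + 1) = nnI k s := congrArg (nnI k) (by ring)
      rw [he2]
      ext t
      simp only [Finsupp.sub_apply, Finsupp.add_apply, Finsupp.smul_apply,
        smul_eq_mul, Finsupp.single_apply]
      split_ifs <;> push_cast <;> ring
  · -- identity step
    refine ⟨s, h0, hsk, ?_⟩
    have h1 : ¬ -m = nnI k s := by
      intro h
      rcases lt_or_ge s k with h' | h'
      · exact hA ⟨h, h'⟩
      · have := nnI_big k s h'
        omega
    have hpk : (phiK lam1 lam2 k s).2 (-m) = 0 := by
      rw [phiK_apply]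
      by_cases h2 : -m = nnI k (s + 1)
      · have hs0 : s = 0 := by
          by_contra hs0
          rcases lt_or_ge (s + 1) k with h' | h'
          · exact hB ⟨h2, by omega, h'⟩
          · have := nnI_big k (s + 1) h'
            omega
        rw [if_neg h1, if_pos h2, hs0]
        norm_num
      · rw [if_neg h1, if_neg h2]
        norm_num
    unfold SbarB SbarG
    rw [hpk, if_neg (lt_irrefl 0), zero_mul, sub_zero, zero_smul, sub_zero]

end XiAux
end
noncomputable section
namespace XiAux

lemma genB_eq (lam1 lam2 k : ℤ) (hk : 1 ≤ k) :
    genB lam1 lam2 k = phiK lam1 lam2 k 0 := by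
  unfold genB phiK
  refine Prod.ext ?_ ?_ <;> dsimp only
  · unfold phiC
    rcases eq_or_lt_of_le hk with h | h
    · rw [← h, if_pos (by omega), if_neg (by omega)]
      push_cast
      ring
    · rw [if_neg (by omega), if_neg (by omega)]
      push_cast
      ring
  · rw [show nnI k 0 = -k from by unfold nnI; rw [if_pos (by omega)]; ring]
    norm_num

lemma phiC_nonneg (lam1 lam2 k s : ℤ) (h1 : 0 < lam1) (hk : 1 ≤ k)
    (h0 : 0 ≤ s) (hsk : s ≤ k) : 0 ≤ phiC lam1 lam2 k s := by
  have hCB0 : 0 ≤ CB lam1 lam2 k := le_max_left _ _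
  have hCB1 : -(k - 1) * lam1 - k * lam2 ≤ CB lam1 lam2 k := le_max_right _ _
  have hl1 : 0 ≤ (k - 1) * lam1 := mul_nonneg (by omega) (by omega)
  unfold phiC
  split_ifs with ha hb hb
  · -- s = k
    nlinarith
  · linarith
  · omega
  · linarith

lemma foldl_inv (lam1 lam2 k : ℤ) (hk : 1 ≤ k) (js : List ℤ)
    (hjs : ∀ m ∈ js, 1 ≤ m) :
    ∀ s : ℤ, 0 ≤ s → s ≤ k →
      ∃ s', 0 ≤ s' ∧ s' ≤ k ∧
        js.foldl (fun ψ m => SbarB lam1 lam2 (-m) ψ) (phiK lam1 lam2 k s) =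
          phiK lam1 lam2 k s' := by
  induction js with
  | nil => intro s h0 hsk; exact ⟨s, h0, hsk, rfl⟩
  | cons m js ih =>
    intro s h0 hsk
    obtain ⟨s1, hs10, hs1k, hstep⟩ :=
      step lam1 lam2 k m s hk (hjs m List.mem_cons_self) h0 hsk
    obtain ⟨s', h0', hk', hrest⟩ :=
      ih (fun m' hm' => hjs m' (List.mem_cons_of_mem m hm')) s1 hs10 hs1k
    exact ⟨s', h0', hk', by rw [List.foldl_cons, hstep, hrest]⟩

end XiAux
end
/-- Type `A_1^{(1)}` (key step of Hoshino–Nakashima, Theorem 6.1): every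
element of `Ξ'_ι[λ]` has nonnegative constant term; equivalently, the zero
vector lies in `Σ'_ι[λ]`. -/
theorem XiPrime_constant_term_nonneg_A_1_1
    (lam1 lam2 : ℤ) (h1 : 0 < lam1) (h2 : lam2 ≤ 0) (hlev : 0 < lam1 + lam2) :
    ∀ φ ∈ XiPrimeB lam1 lam2, 0 ≤ φ.1 := by
  rintro φ ⟨js, hjs, k, hk, rfl⟩
  rw [XiAux.genB_eq lam1 lam2 k hk]
  obtain ⟨s', h0', hk', heq⟩ :=
    XiAux.foldl_inv lam1 lam2 k hk js hjs 0 le_rfl (by omega)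
  rw [heq]
  show (0 : ℚ) ≤ (XiAux.phiC lam1 lam2 k s' : ℚ)
  exact_mod_cast XiAux.phiC_nonneg lam1 lam2 k s' h1 hk h0' hk'
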